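/- If s : ℝ → ℝ is twice differentiable on an interval I containing 0, satisfies s''(t) = 6 s(t)^2 + 6 t on I, with s(0) = 0 and s'(0) = 0, then for every t > 0 in I we have s'(t) > 3 t^2 and s(t) > t^3. -/

import Mathlib

open Set

theorem painleve_initial_growth
    (s : ℝ → ℝ) (a b : ℝ) (ha : a < 0) (hb : 0 < b)
    (hdiff : ∀ t ∈ Ioo a b, DifferentiableAt ℝ s t ∧ DifferentiableAt ℝ (deriv s) t)
    (heq : ∀ t ∈ Ioo a b, deriv (deriv s) t = 6 * (s t) ^ 2 + 6 * t)
    (h0 : s 0 = 0) (h0' : deriv s 0 = 0) :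
    ∀ t ∈ Ioo a b, 0 < t → deriv s t > 3 * t ^ 2 ∧ s t > t ^ 3 := by
  intro t ht htpos
  have hsub : Icc (0:ℝ) t ⊆ Ioo a b := fun u hu =>
    ⟨lt_of_lt_of_le ha hu.1, lt_of_le_of_lt hu.2 ht.2⟩
  set g : ℝ → ℝ := fun u => deriv s u - 3 * u ^ 2 with hg
  have hgdiff : ∀ u ∈ Ioo a b, DifferentiableAt ℝ g u := fun u hu =>
    ((hdiff u hu).2.sub (by fun_prop))
  have hgderiv : ∀ u ∈ Ioo a b, deriv g u = 6 * (s u) ^ 2 := by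
    intro u hu
    rw [hg]
    rw [deriv_fun_sub (hdiff u hu).2 (by fun_prop), heq u hu]
    have h3 : deriv (fun u : ℝ => 3 * u ^ 2) u = 6 * u := by
      rw [deriv_const_mul _ (by fun_prop)]
      simp [deriv_pow]; ring
    rw [h3]; ring
  have hgmono : MonotoneOn g (Icc 0 t) := by
    apply monotoneOn_of_deriv_nonneg (convex_Icc 0 t)
    · exact fun u hu => (hgdiff u (hsub hu)).continuousAt.continuousWithinAt
    · intro u hu
      rw [interior_Icc] at hu
      exact ((hgdiff u (hsub (Ioo_subset_Icc_self hu))).differentiableWithinAt)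
    · intro u hu
      rw [interior_Icc] at hu
      rw [hgderiv u (hsub (Ioo_subset_Icc_self hu))]
      positivity
  have hg0 : g 0 = 0 := by simp [hg, h0']
  have hgnn : ∀ u ∈ Icc (0:ℝ) t, 0 ≤ g u := fun u hu =>
    hg0 ▸ hgmono (left_mem_Icc.2 htpos.le) hu hu.1
  have hsmono : StrictMonoOn s (Icc 0 t) := by
    apply strictMonoOn_of_deriv_pos (convex_Icc 0 t)
    · exact fun u hu => (hdiff u (hsub hu)).1.continuousAt.continuousWithinAt
    · intro u hu
      rw [interior_Icc] at hu
      have h1 := hgnn u (Ioo_subset_Icc_self hu)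
      have h2 : 3 * u ^ 2 ≤ deriv s u := by
        have : deriv s u - 3 * u ^ 2 = g u := rfl
        linarith [h1, this ▸ h1]
      nlinarith [hu.1]
  have hspos : ∀ u ∈ Ioc (0:ℝ) t, 0 < s u := by
    intro u hu
    have := hsmono (left_mem_Icc.2 htpos.le) ⟨hu.1.le, hu.2⟩ hu.1
    rwa [h0] at this
  have hgsmono : StrictMonoOn g (Icc 0 t) := by
    apply strictMonoOn_of_deriv_pos (convex_Icc 0 t)
    · exact fun u hu => (hgdiff u (hsub hu)).continuousAt.continuousWithinAt
    · intro u hu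
      rw [interior_Icc] at hu
      rw [hgderiv u (hsub (Ioo_subset_Icc_self hu))]
      have := hspos u ⟨hu.1, hu.2.le⟩
      positivity
  have hgt : 0 < g t := by
    have := hgsmono (left_mem_Icc.2 htpos.le) (right_mem_Icc.2 htpos.le) htpos
    rwa [hg0] at this
  have hgpos : ∀ u ∈ Ioc (0:ℝ) t, 0 < g u := by
    intro u hu
    have := hgsmono (left_mem_Icc.2 htpos.le) ⟨hu.1.le, hu.2⟩ hu.1
    rwa [hg0] at this
  constructor
  · have : deriv s t - 3 * t ^ 2 = g t := rfl
    linarith [this ▸ hgt]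
  · have hhsmono : StrictMonoOn (fun u => s u - u ^ 3) (Icc 0 t) := by
      apply strictMonoOn_of_deriv_pos (convex_Icc 0 t)
      · exact fun u hu =>
          ((hdiff u (hsub hu)).1.continuousAt.continuousWithinAt.sub
            ((continuous_pow 3).continuousWithinAt))
      · intro u hu
        rw [interior_Icc] at hu
        rw [deriv_fun_sub (hdiff u (hsub (Ioo_subset_Icc_self hu))).1 (by fun_prop)]
        have hd3 : deriv (fun u : ℝ => u ^ 3) u = 3 * u ^ 2 := by
          simp [deriv_pow]
        rw [hd3]
        have := hgpos u ⟨hu.1, hu.2.le⟩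
        have heqg : g u = deriv s u - 3 * u ^ 2 := rfl
        linarith [heqg ▸ this]
    have := hhsmono (left_mem_Icc.2 htpos.le) (right_mem_Icc.2 htpos.le) htpos
    simp only [h0] at this
    linarith
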